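/- arXiv:1607.08319 — 2 statements merged into one kernel-verified Lean document; each statement's English description precedes it below -/
import Mathlib

section
/- Assume the angular equidistribution of Gaussian primes: for all 0 ≤ θ₁ < θ₂ ≤ 2π, the count Π(x; θ₁, θ₂) of Gaussian primes ρ with θ₁ ≤ arg ρ ≤ θ₂ and |ρ|² ≤ x satisfies Π(x; θ₁, θ₂) ~ (4(θ₂−θ₁)/(2π))·x/ln x. Then every open annular sector {z ∈ ℂ : ψ₁ < arg z < ψ₂, r < |z| < R} with 0 < r < R and ψ₁ < ψ₂ contains a quotient of two Gaussian primes. -/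
open Filter

/-- The argument of a complex number, taken in `[0, 2π)`. -/
noncomputable def arg2pi (z : ℂ) : ℝ :=
  if 0 ≤ z.arg then z.arg else z.arg + 2 * Real.pi

lemma arg2pi_nonneg (z : ℂ) : 0 ≤ arg2pi z := by
  unfold arg2pi; split
  · assumption
  · nlinarith [Complex.neg_pi_lt_arg z, Real.pi_pos]

lemma arg2pi_lt (z : ℂ) : arg2pi z < 2 * Real.pi := by
  unfold arg2pi; split
  · nlinarith [Complex.arg_le_pi z, Real.pi_pos]
  · linarith [show z.arg < 0 by linarith [lt_of_not_ge (by assumption)]]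

lemma arg2pi_angle (z : ℂ) : (arg2pi z : Real.Angle) = (z.arg : Real.Angle) := by
  unfold arg2pi; split
  · rfl
  · exact Real.Angle.angle_eq_iff_two_pi_dvd_sub.2 ⟨1, by push_cast; ring⟩

lemma arg2pi_div {z w : ℂ} (hz : z ≠ 0) (hw : w ≠ 0) :
    ∃ k : ℤ, arg2pi (z / w) - (arg2pi z - arg2pi w) = 2 * Real.pi * k := by
  have h : ((arg2pi (z / w) : ℝ) : Real.Angle) = ((arg2pi z - arg2pi w : ℝ) : Real.Angle) := by
    rw [arg2pi_angle, Complex.arg_div_coe_angle hz hw, Real.Angle.coe_sub,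
      arg2pi_angle, arg2pi_angle]
  exact Real.Angle.angle_eq_iff_two_pi_dvd_sub.1 h

lemma log_ratio (a : ℝ) (ha : 0 < a) :
    Tendsto (fun x : ℝ => Real.log x / Real.log (a * x)) atTop (nhds 1) := by
  have h0 : Tendsto (fun y : ℝ => Real.log a / (Real.log a + y)) atTop (nhds 0) :=
    tendsto_const_nhds.div_atTop (tendsto_atTop_add_const_left _ _ tendsto_id)
  have h1 : Tendsto (fun y : ℝ => y / (Real.log a + y)) atTop (nhds 1) := by
    have := (tendsto_const_nhds (x := (1:ℝ)) (f := atTop)).sub h0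
    rw [sub_zero] at this
    refine this.congr' ?_
    filter_upwards [eventually_gt_atTop (|Real.log a|)] with y hy
    have hne : Real.log a + y ≠ 0 := by
      have h2 : -y < Real.log a := by
        have := neg_abs_le (Real.log a); linarith
      linarith
    field_simp
    ring
  have := h1.comp Real.tendsto_log_atTop
  refine this.congr' ?_
  filter_upwards [eventually_gt_atTop 0] with x hx
  simp [Function.comp, Real.log_mul (ne_of_gt ha) (ne_of_gt hx), add_comm]

lemma key {F : ℝ → ℝ} {c a : ℝ} (hc : 0 < c) (ha : 0 < a) (ha1 : a < 1)
    (hF : Tendsto (fun x => F x / (c * (x / Real.log x))) atTop (nhds 1)) :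
    ∀ᶠ x in atTop, F (a * x) < F x := by
  have hcomp : Tendsto (fun x => F (a * x) / (c * ((a * x) / Real.log (a * x))))
      atTop (nhds 1) := hF.comp (Tendsto.const_mul_atTop ha tendsto_id)
  have hP : Tendsto (fun x => F (a * x) / (c * ((a * x) / Real.log (a * x)))
      * (a * (Real.log x / Real.log (a * x)))) atTop (nhds a) := by
    have := hcomp.mul ((tendsto_const_nhds (x := a) (f := atTop)).mul (log_ratio a ha))
    simpa using this
  have hP' : Tendsto (fun x => F (a * x) / (c * (x / Real.log x))) atTop (nhds a) := by
    refine hP.congr' ?_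
    filter_upwards [eventually_gt_atTop (max 1 (1 / a))] with x hx
    have hx1 : (1:ℝ) < x := lt_of_le_of_lt (le_max_left _ _) hx
    have hax : 1 < a * x := by
      have : 1 / a < x := lt_of_le_of_lt (le_max_right _ _) hx
      calc (1:ℝ) = a * (1/a) := by field_simp
      _ < a * x := by exact mul_lt_mul_of_pos_left this ha
    have hlx : 0 < Real.log x := Real.log_pos hx1
    have hlax : 0 < Real.log (a * x) := Real.log_pos hax
    field_simp
  have hdiff : Tendsto (fun x => F x / (c * (x / Real.log x))
      - F (a * x) / (c * (x / Real.log x))) atTop (nhds (1 - a)) := hF.sub hP'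
  have hev := hdiff.eventually (eventually_gt_nhds (by linarith : (0:ℝ) < 1 - a))
  filter_upwards [hev, eventually_gt_atTop 1] with x hx hx1
  have hg : 0 < c * (x / Real.log x) := by
    have := Real.log_pos hx1
    positivity
  have h2 : (F x - F (a * x)) / (c * (x / Real.log x)) > 0 := by
    rw [sub_div]; exact hx
  have h3 : 0 < F x - F (a * x) := by
    have := mul_pos h2 hg
    rwa [div_mul_cancel₀ _ (ne_of_gt hg)] at this
  linarith

lemma exists_prime_between {θ₁ θ₂ a : ℝ} (ha : 0 < a) (ha1 : a < 1)
    (hF : ∀ᶠ x in atTop,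
      (Nat.card {ρ : GaussianInt // Prime ρ ∧
          θ₁ ≤ arg2pi (GaussianInt.toComplex ρ) ∧
          arg2pi (GaussianInt.toComplex ρ) ≤ θ₂ ∧
          ‖GaussianInt.toComplex ρ‖ ^ 2 ≤ a * x} : ℝ) <
      (Nat.card {ρ : GaussianInt // Prime ρ ∧
          θ₁ ≤ arg2pi (GaussianInt.toComplex ρ) ∧
          arg2pi (GaussianInt.toComplex ρ) ≤ θ₂ ∧
          ‖GaussianInt.toComplex ρ‖ ^ 2 ≤ x} : ℝ)) :
    ∀ᶠ x in atTop, ∃ ρ : GaussianInt, Prime ρ ∧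
      θ₁ ≤ arg2pi (GaussianInt.toComplex ρ) ∧
      arg2pi (GaussianInt.toComplex ρ) ≤ θ₂ ∧
      a * x < ‖GaussianInt.toComplex ρ‖ ^ 2 ∧
      ‖GaussianInt.toComplex ρ‖ ^ 2 ≤ x := by
  filter_upwards [hF, eventually_gt_atTop 0] with x hx hx0
  by_contra hcon
  push_neg at hcon
  have hiff : ∀ ρ : GaussianInt, (Prime ρ ∧
      θ₁ ≤ arg2pi (GaussianInt.toComplex ρ) ∧
      arg2pi (GaussianInt.toComplex ρ) ≤ θ₂ ∧
      ‖GaussianInt.toComplex ρ‖ ^ 2 ≤ x) ↔ (Prime ρ ∧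
      θ₁ ≤ arg2pi (GaussianInt.toComplex ρ) ∧
      arg2pi (GaussianInt.toComplex ρ) ≤ θ₂ ∧
      ‖GaussianInt.toComplex ρ‖ ^ 2 ≤ a * x) := by
    intro ρ
    constructor
    · rintro ⟨h1, h2, h3, h4⟩
      refine ⟨h1, h2, h3, ?_⟩
      by_contra h5
      push_neg at h5
      exact absurd h4 (not_le.2 (hcon ρ h1 h2 h3 h5))
    · rintro ⟨h1, h2, h3, h4⟩
      exact ⟨h1, h2, h3, le_trans h4 (by nlinarith)⟩
  have := Nat.card_congr (Equiv.subtypeEquivRight hiff)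
  rw [this] at hx
  exact lt_irrefl _ hx

lemma sandwich_lower {r a t x n₁ n₂ : ℝ} (ht : 0 < t) (hx : 0 < x)
    (har2 : r ^ 2 < a * t) (h1 : a * x < n₁) (h2 : n₂ * t ≤ x) :
    r ^ 2 * n₂ < n₁ := by
  nlinarith [mul_le_mul_of_nonneg_left h2 (sq_nonneg r),
    mul_lt_mul_of_pos_right har2 hx, mul_lt_mul_of_pos_right h1 ht]

lemma sandwich_upper {R a t x n₁ n₂ : ℝ} (ht : 0 < t) (hx : 0 < x) (hR : 0 < R)
    (hat2 : t < a * R ^ 2) (h1 : n₁ ≤ x) (h2 : a * x < n₂ * t) :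
    n₁ < R ^ 2 * n₂ := by
  nlinarith [mul_le_mul_of_nonneg_right h1 (le_of_lt ht),
    mul_lt_mul_of_pos_right hat2 hx,
    mul_lt_mul_of_pos_right h2 (by positivity : (0:ℝ) < R ^ 2)]

lemma kzero {u d p : ℝ} {k : ℤ} (hp : 0 < p) (hu0 : 0 ≤ u) (hu2 : u < p)
    (hd0 : 0 ≤ d) (hd2 : d < p) (hk : u - d = p * k) : k = 0 := by
  have h1 : (k : ℝ) < 1 := by nlinarith
  have h2 : (-1 : ℝ) < (k : ℝ) := by nlinarith
  have h1' : k < 1 := by exact_mod_cast h1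
  have h2' : (-1 : ℤ) < k := by exact_mod_cast h2
  omega

set_option maxHeartbeats 1000000 in
/-- Assuming Kubilius' angular equidistribution of Gaussian primes, every open annular
sector contains a quotient of two Gaussian primes. -/
theorem annular_sector_contains_quotient_of_gaussian_primes
    (hKub : ∀ θ₁ θ₂ : ℝ, 0 ≤ θ₁ → θ₁ < θ₂ → θ₂ ≤ 2 * Real.pi →
      Tendsto (fun x : ℝ =>
          (Nat.card {ρ : GaussianInt // Prime ρ ∧
              θ₁ ≤ arg2pi (GaussianInt.toComplex ρ) ∧
              arg2pi (GaussianInt.toComplex ρ) ≤ θ₂ ∧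
              ‖GaussianInt.toComplex ρ‖ ^ 2 ≤ x} : ℝ) /
            (4 * (θ₂ - θ₁) / (2 * Real.pi) * (x / Real.log x)))
        atTop (nhds 1))
    (ψ₁ ψ₂ r R : ℝ) (hψ₁ : 0 ≤ ψ₁) (hψ : ψ₁ < ψ₂) (hψ₂ : ψ₂ ≤ 2 * Real.pi)
    (hr : 0 < r) (hrR : r < R) :
    ∃ π₁ π₂ : GaussianInt, Prime π₁ ∧ Prime π₂ ∧
      ψ₁ < arg2pi (GaussianInt.toComplex π₁ / GaussianInt.toComplex π₂) ∧
      arg2pi (GaussianInt.toComplex π₁ / GaussianInt.toComplex π₂) < ψ₂ ∧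
      r < ‖GaussianInt.toComplex π₁ / GaussianInt.toComplex π₂‖ ∧
      ‖GaussianInt.toComplex π₁ / GaussianInt.toComplex π₂‖ < R := by
  have hpi : 0 < Real.pi := Real.pi_pos
  have hR : 0 < R := lt_trans hr hrR
  set β : ℝ := (ψ₁ + ψ₂) / 2 with hβ
  set δ : ℝ := (ψ₂ - ψ₁) / 8 with hδ
  set a : ℝ := (r / R + 1) / 2 with ha_def
  set t : ℝ := r * R with ht_def
  have hrR1 : r / R < 1 := (div_lt_one hR).2 hrR
  have hrR0 : 0 < r / R := div_pos hr hR
  have ha0 : 0 < a := by rw [ha_def]; linarith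
  have ha1 : a < 1 := by rw [ha_def]; linarith
  have harR : r / R < a := by rw [ha_def]; linarith
  have ht : 0 < t := mul_pos hr hR
  have hδ0 : 0 < δ := by rw [hδ]; linarith
  -- interval 1 : [β - δ, β]
  have hI1a : 0 ≤ β - δ := by rw [hβ, hδ]; linarith
  have hI1b : β - δ < β := by linarith
  have hI1c : β ≤ 2 * Real.pi := by rw [hβ]; linarith
  -- interval 2 : [0, δ]
  have hI2c : δ ≤ 2 * Real.pi := by rw [hδ]; linarith
  have hc1 : 0 < 4 * (β - (β - δ)) / (2 * Real.pi) := by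
    apply div_pos <;> linarith
  have hc2 : 0 < 4 * (δ - 0) / (2 * Real.pi) := by
    apply div_pos <;> linarith
  have hE1 := exists_prime_between ha0 ha1 (key hc1 ha0 ha1 (hKub (β - δ) β hI1a hI1b hI1c))
  have hE2 := exists_prime_between ha0 ha1 (key hc2 ha0 ha1 (hKub 0 δ le_rfl hδ0 hI2c))
  have hE2' := (tendsto_id.atTop_div_const ht).eventually hE2
  obtain ⟨x, ⟨⟨π₁, hp1, hA1a, hA1b, hn1a, hn1b⟩, ⟨π₂, hp2, hA2a, hA2b, hn2a, hn2b⟩⟩, hx0⟩ :=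
    ((hE1.and hE2').and (eventually_gt_atTop 0)).exists
  simp only [id] at hn2a hn2b
  -- notation
  set z₁ := GaussianInt.toComplex π₁ with hz₁def
  set z₂ := GaussianInt.toComplex π₂ with hz₂def
  set n₁ := ‖z₁‖ ^ 2 with hn₁def
  set n₂ := ‖z₂‖ ^ 2 with hn₂def
  -- magnitude bounds
  have hn2ta : a * x < n₂ * t := by
    have h : a * x / t < n₂ := by rw [mul_div_assoc]; exact hn2a
    exact (div_lt_iff₀ ht).1 h
  have hn2tb : n₂ * t ≤ x := (le_div_iff₀ ht).1 hn2b
  have hz1 : z₁ ≠ 0 := by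
    rw [hz₁def, Ne, GaussianInt.toComplex_eq_zero]; exact hp1.ne_zero
  have hz2 : z₂ ≠ 0 := by
    rw [hz₂def, Ne, GaussianInt.toComplex_eq_zero]; exact hp2.ne_zero
  have hn2pos : 0 < n₂ := by
    rw [hn₂def]; exact pow_pos (norm_pos_iff.2 hz2) 2
  have har : r < a * R := (div_lt_iff₀ hR).1 harR
  have har2 : r ^ 2 < a * t := by
    rw [ht_def]
    calc r ^ 2 = r * r := by ring
    _ < (a * R) * r := mul_lt_mul_of_pos_right har hr
    _ = a * (r * R) := by ring
  have hat2 : t < a * R ^ 2 := by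
    rw [ht_def]
    calc r * R < (a * R) * R := mul_lt_mul_of_pos_right har hR
    _ = a * R ^ 2 := by ring
  have hlow : r ^ 2 * n₂ < n₁ := sandwich_lower ht hx0 har2 hn1a hn2tb
  have hhigh : n₁ < R ^ 2 * n₂ := sandwich_upper ht hx0 hR hat2 hn1b hn2ta
  have hmsq : ‖z₁ / z₂‖ ^ 2 = n₁ / n₂ := by
    rw [norm_div, div_pow]
  have hm1 : r < ‖z₁ / z₂‖ := by
    refine lt_of_pow_lt_pow_left₀ 2 (norm_nonneg _) ?_
    rw [hmsq]
    exact (lt_div_iff₀ hn2pos).2 hlow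
  have hm2 : ‖z₁ / z₂‖ < R := by
    refine lt_of_pow_lt_pow_left₀ 2 (le_of_lt hR) ?_
    rw [hmsq]
    exact (div_lt_iff₀ hn2pos).2 (by linarith)
  -- angle bounds
  obtain ⟨k, hk⟩ := arg2pi_div hz1 hz2
  set d : ℝ := arg2pi z₁ - arg2pi z₂ with hd_def
  have hd1 : ψ₁ < d := by rw [hd_def]; rw [hβ] at hA1a; rw [hδ] at hA1a hA2b; linarith
  have hd2 : d < ψ₂ := by rw [hd_def]; rw [hβ] at hA1b; linarith
  have hq0 : 0 ≤ arg2pi (z₁ / z₂) := arg2pi_nonneg _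
  have hq2 : arg2pi (z₁ / z₂) < 2 * Real.pi := arg2pi_lt _
  have hk0 : k = 0 := by
    refine kzero (p := 2 * Real.pi) (d := d) (by linarith) hq0 hq2 (by linarith) (by linarith) ?_
    rw [hd_def] at hk ⊢; linarith [hk]
  have harg : arg2pi (z₁ / z₂) = d := by
    rw [hk0] at hk; push_cast at hk; linarith
  exact ⟨π₁, π₂, hp1, hp2, by rw [harg]; exact hd1, by rw [harg]; exact hd2, hm1, hm2⟩
end

section
/- Let 𝒪 be the ring of integers of a real quadratic field ℚ(√d), d > 1 squarefree, with fundamental unit η > 1, class number h. Assume Rademacher's theorem: for 0 < a < b with 1 < b/a < η², the count Π(x; a, b) of totally positive primes ρ ∈ 𝒪 with N(ρ) ≤ x and a < ρ'/ρ ≤ b satisfies Π(x; a, b) ~ ((ln b − ln a)/(2h ln(η²)))·x/ln x. Then the set of quotients of prime elements of 𝒪 is dense in ℝ. -/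
open Filter

lemma rad_window (F : ℝ → ℝ) (C K : ℝ) (hC : 0 < C) (hK : 1 < K)
    (h1 : Tendsto (fun x => F x / (C * (x / Real.log x))) atTop (nhds 1)) :
    ∀ᶠ x : ℝ in atTop, F x < F (K * x) := by
  have hK0 : (0:ℝ) < K := one_pos.trans hK
  have hmul : Tendsto (fun x : ℝ => K * x) atTop atTop :=
    Tendsto.const_mul_atTop hK0 tendsto_id
  have hcomp : Tendsto (fun x : ℝ => F (K*x) / (C * ((K*x) / Real.log (K*x)))) atTop (nhds 1) := by
    have := h1.comp hmul
    exact this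
  have hlogK : Tendsto (fun x : ℝ => Real.log x / Real.log (K*x)) atTop (nhds 1) := by
    have h2 : Tendsto (fun x : ℝ => Real.log K / Real.log x + 1) atTop (nhds (0+1)) :=
      (tendsto_const_nhds.div_atTop Real.tendsto_log_atTop).add tendsto_const_nhds
    rw [zero_add] at h2
    have h3 := h2.inv₀ one_ne_zero
    rw [inv_one] at h3
    apply h3.congr'
    filter_upwards [eventually_gt_atTop 1] with x hx
    have hx0 : (0:ℝ) < x := one_pos.trans hx
    have hlx : 0 < Real.log x := Real.log_pos hx
    rw [Real.log_mul (ne_of_gt hK0) (ne_of_gt hx0)]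
    rw [div_add' _ _ _ (ne_of_gt hlx)]
    rw [one_mul, inv_div]
  have hG : Tendsto (fun x : ℝ => F (K*x) / (C * (x / Real.log x))) atTop (nhds K) := by
    have hm := hcomp.mul (hlogK.const_mul K)
    rw [one_mul, mul_one] at hm
    apply hm.congr'
    filter_upwards [eventually_gt_atTop 1] with x hx
    have hx0 : (0:ℝ) < x := one_pos.trans hx
    have hlx : 0 < Real.log x := Real.log_pos hx
    have hKx : (1:ℝ) < K * x := by nlinarith
    have hlKx : 0 < Real.log (K*x) := Real.log_pos hKx
    field_simp
  have hdiff : Tendsto (fun x : ℝ => F (K*x) / (C*(x/Real.log x)) - F x / (C*(x/Real.log x)))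
      atTop (nhds (K - 1)) := hG.sub h1
  have hev : ∀ᶠ x : ℝ in atTop, 0 < F (K*x)/(C*(x/Real.log x)) - F x/(C*(x/Real.log x)) :=
    hdiff.eventually (eventually_gt_nhds (by linarith))
  filter_upwards [hev, eventually_gt_atTop 1] with x hx hx1
  have hlx : 0 < Real.log x := Real.log_pos hx1
  have hD : 0 < C * (x / Real.log x) := by positivity
  have h4 : F x / (C*(x/Real.log x)) < F (K*x) / (C*(x/Real.log x)) := by linarith
  exact (div_lt_div_iff_of_pos_right hD).mp h4


set_option maxHeartbeats 1000000 in
/-- Assuming Rademacher's prime number theorem for the ring of integers `𝒪` of a real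
quadratic field `ℚ(√d)` (embedded in ℝ), the set of quotients of prime elements of `𝒪`
is dense in ℝ. Here `conj` is the quadratic conjugation `a + b√d ↦ a - b√d`, `η > 1` is a
fundamental unit and `h` is the class number. -/
theorem quotients_of_primes_real_quadratic_dense
    (d : ℤ) (hd : Squarefree d) (hd1 : 1 < d)
    (O : Subring ℝ)
    (hO : ∀ x : ℝ, x ∈ O ↔ IsIntegral ℤ x ∧
      ∃ a b : ℚ, x = (a : ℝ) + (b : ℝ) * Real.sqrt (d : ℝ))
    (conj : ℝ → ℝ)
    (hconj : ∀ a b : ℚ,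
      conj ((a : ℝ) + (b : ℝ) * Real.sqrt (d : ℝ)) = (a : ℝ) - (b : ℝ) * Real.sqrt (d : ℝ))
    (η : Oˣ) (hη : 1 < ((η : O) : ℝ))
    (hfund : ∀ u : Oˣ, 1 < ((u : O) : ℝ) → ((η : O) : ℝ) ≤ ((u : O) : ℝ))
    (h : ℕ) (hh : 0 < h)
    (hRad : ∀ a b : ℝ, 0 < a → 1 < b / a → b / a < ((η : O) : ℝ) ^ 2 →
      Tendsto (fun x : ℝ =>
          (Nat.card {ρ : O // Prime ρ ∧ 0 < (ρ : ℝ) ∧ 0 < conj (ρ : ℝ) ∧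
              (ρ : ℝ) * conj (ρ : ℝ) ≤ x ∧
              a < conj (ρ : ℝ) / (ρ : ℝ) ∧ conj (ρ : ℝ) / (ρ : ℝ) ≤ b} : ℝ) /
            ((Real.log b - Real.log a) / (2 * (h : ℝ) * Real.log (((η : O) : ℝ) ^ 2)) *
              (x / Real.log x)))
        atTop (nhds 1)) :
    Dense {q : ℝ | ∃ π₁ π₂ : O, Prime π₁ ∧ Prime π₂ ∧ q = (π₁ : ℝ) / (π₂ : ℝ)} := by
  obtain ⟨e, he_def⟩ : ∃ e : ℝ, e = ((η : O) : ℝ) := ⟨_, rfl⟩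
  rw [← he_def] at hη hRad
  have he : 1 < e := hη
  have he2 : 1 < e ^ 2 := by nlinarith
  -- Key: primes in any multiplicative window
  have key : ∀ l : ℝ, 1 < l → ∃ L₀ : ℝ, 0 < L₀ ∧ ∀ L : ℝ, L₀ ≤ L →
      ∃ ρ : O, Prime ρ ∧ 0 < (ρ : ℝ) ∧ L < (ρ : ℝ) ∧ (ρ : ℝ) < l * L := by
    intro l hl
    obtain ⟨b, hb_def⟩ : ∃ b : ℝ, b = 1 + min (l - 1) (e ^ 2 - 1) / 2 := ⟨_, rfl⟩
    have hmin : 0 < min (l - 1) (e ^ 2 - 1) := lt_min (by linarith) (by linarith)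
    have hb1 : 1 < b := by rw [hb_def]; linarith
    have hbl : b < l := by
      have := min_le_left (l - 1) (e ^ 2 - 1); rw [hb_def]; linarith
    have hbe : b < e ^ 2 := by
      have := min_le_right (l - 1) (e ^ 2 - 1); rw [hb_def]; linarith
    have hC : 0 < (Real.log b - Real.log 1) / (2 * (h : ℝ) * Real.log (e ^ 2)) := by
      rw [Real.log_one, sub_zero]
      have h1 : 0 < Real.log b := Real.log_pos hb1
      have h2 : 0 < Real.log (e ^ 2) := Real.log_pos he2
      have h3 : 0 < (h : ℝ) := by exact_mod_cast hh
      positivity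
    have hT := hRad 1 b one_pos (by rwa [div_one]) (by rwa [div_one])
    have hwin := rad_window
      (fun x => (Nat.card {ρ : O // Prime ρ ∧ 0 < (ρ : ℝ) ∧ 0 < conj (ρ : ℝ) ∧
          (ρ : ℝ) * conj (ρ : ℝ) ≤ x ∧
          1 < conj (ρ : ℝ) / (ρ : ℝ) ∧ conj (ρ : ℝ) / (ρ : ℝ) ≤ b} : ℝ))
      ((Real.log b - Real.log 1) / (2 * (h : ℝ) * Real.log (e ^ 2))) b hC hb1 hT
    rw [eventually_atTop] at hwin
    obtain ⟨x₁, hx₁⟩ := hwin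
    obtain ⟨x₂, hx₂_def⟩ : ∃ x₂ : ℝ, x₂ = max x₁ 2 := ⟨_, rfl⟩
    have hx₂2 : (2:ℝ) ≤ x₂ := hx₂_def ▸ le_max_right _ _
    have hx₂1 : x₁ ≤ x₂ := hx₂_def ▸ le_max_left _ _
    refine ⟨Real.sqrt x₂, Real.sqrt_pos.mpr (by linarith), ?_⟩
    intro L hL
    have hL0 : 0 < L := lt_of_lt_of_le (Real.sqrt_pos.mpr (by linarith)) hL
    obtain ⟨x, hx_def⟩ : ∃ x : ℝ, x = b * L ^ 2 := ⟨_, rfl⟩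
    have hxx : x₂ ≤ x := by
      have h1 : Real.sqrt x₂ ^ 2 ≤ L ^ 2 := by
        apply pow_le_pow_left₀ (Real.sqrt_nonneg _) hL
      rw [Real.sq_sqrt (by linarith : (0:ℝ) ≤ x₂)] at h1
      nlinarith
    have hx0 : 0 < x := by linarith
    have hcard := hx₁ x (le_trans hx₂1 hxx)
    -- extract element of S(b*x) \ S(x)
    by_cases hall : ∀ ρ : O, (Prime ρ ∧ 0 < (ρ : ℝ) ∧ 0 < conj (ρ : ℝ) ∧
        (ρ : ℝ) * conj (ρ : ℝ) ≤ b * x ∧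
        1 < conj (ρ : ℝ) / (ρ : ℝ) ∧ conj (ρ : ℝ) / (ρ : ℝ) ≤ b) →
        (ρ : ℝ) * conj (ρ : ℝ) ≤ x
    · exfalso
      have heq : Nat.card {ρ : O // Prime ρ ∧ 0 < (ρ : ℝ) ∧ 0 < conj (ρ : ℝ) ∧
            (ρ : ℝ) * conj (ρ : ℝ) ≤ x ∧
            1 < conj (ρ : ℝ) / (ρ : ℝ) ∧ conj (ρ : ℝ) / (ρ : ℝ) ≤ b}
          = Nat.card {ρ : O // Prime ρ ∧ 0 < (ρ : ℝ) ∧ 0 < conj (ρ : ℝ) ∧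
            (ρ : ℝ) * conj (ρ : ℝ) ≤ b * x ∧
            1 < conj (ρ : ℝ) / (ρ : ℝ) ∧ conj (ρ : ℝ) / (ρ : ℝ) ≤ b} := by
        apply Nat.card_congr
        apply Equiv.subtypeEquivRight
        intro ρ
        constructor
        · rintro ⟨h1, h2, h3, h4, h5, h6⟩
          exact ⟨h1, h2, h3, by nlinarith, h5, h6⟩
        · rintro ⟨h1, h2, h3, h4, h5, h6⟩
          exact ⟨h1, h2, h3, hall ρ ⟨h1, h2, h3, h4, h5, h6⟩, h5, h6⟩
      rw [heq] at hcard
      exact lt_irrefl _ hcard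
    · push_neg at hall
      obtain ⟨ρ, ⟨hp, hρ0, hc0, hN2, hr1, hrb⟩, hN1⟩ := hall
      have hcb : conj (ρ : ℝ) ≤ b * (ρ : ℝ) := by
        rw [div_le_iff₀ hρ0] at hrb; linarith
      have hcg : (ρ : ℝ) < conj (ρ : ℝ) := by
        rw [lt_div_iff₀ hρ0, one_mul] at hr1; linarith
      refine ⟨ρ, hp, hρ0, ?_, ?_⟩
      · -- L < ρ
        have h1 : (ρ : ℝ) * conj (ρ : ℝ) ≤ b * (ρ : ℝ) ^ 2 := by
          have := mul_le_mul_of_nonneg_left hcb (le_of_lt hρ0)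
          nlinarith
        have hbL : b * L ^ 2 < b * (ρ : ℝ) ^ 2 := by
          rw [hx_def] at hN1; linarith
        have hsq : L ^ 2 < (ρ : ℝ) ^ 2 := lt_of_mul_lt_mul_left hbL (by linarith)
        exact lt_of_pow_lt_pow_left₀ 2 (le_of_lt hρ0) hsq
      · -- ρ < l * L
        have h1 : (ρ : ℝ) ^ 2 < (ρ : ℝ) * conj (ρ : ℝ) := by
          have := mul_lt_mul_of_pos_left hcg hρ0
          nlinarith
        have hsq : (ρ : ℝ) ^ 2 < (b * L) ^ 2 := by
          rw [hx_def] at hN2; nlinarith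
        have h2 : (ρ : ℝ) < b * L :=
          lt_of_pow_lt_pow_left₀ 2 (by positivity) hsq
        have h3 : b * L < l * L := mul_lt_mul_of_pos_right hbl hL0
        linarith
  -- positive approximation
  have hPos : ∀ t ε : ℝ, 0 < t → 0 < ε →
      ∃ q ∈ {q : ℝ | ∃ π₁ π₂ : O, Prime π₁ ∧ Prime π₂ ∧ q = (π₁ : ℝ) / (π₂ : ℝ)},
        |q - t| < ε := by
    intro t ε ht hε
    obtain ⟨l, hl_def⟩ : ∃ l : ℝ, l = 1 + ε / (2 * t) := ⟨_, rfl⟩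
    have h2t : 0 < ε / (2 * t) := by positivity
    have hl : 1 < l := by rw [hl_def]; linarith
    obtain ⟨L₀, hL₀, hkey⟩ := key l hl
    obtain ⟨L, hL_def⟩ : ∃ L : ℝ, L = max L₀ (L₀ / t) + 1 := ⟨_, rfl⟩
    have hLL₀ : L₀ ≤ L := by
      have := le_max_left L₀ (L₀ / t); rw [hL_def]; linarith
    have hL0 : 0 < L := lt_of_lt_of_le hL₀ hLL₀
    have htL : L₀ ≤ t * L := by
      have h1 : L₀ / t ≤ L := by
        have := le_max_right L₀ (L₀ / t); rw [hL_def]; linarith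
      rw [div_le_iff₀ ht] at h1; linarith
    obtain ⟨π₂, hp₂, hπ₂0, hπ₂l, hπ₂u⟩ := hkey L hLL₀
    obtain ⟨π₁, hp₁, hπ₁0, hπ₁l, hπ₁u⟩ := hkey (t * L) htL
    refine ⟨(π₁ : ℝ) / (π₂ : ℝ), ⟨π₁, π₂, hp₁, hp₂, rfl⟩, ?_⟩
    obtain ⟨q, hq_def⟩ : ∃ q : ℝ, q = (π₁ : ℝ) / (π₂ : ℝ) := ⟨_, rfl⟩
    rw [← hq_def]
    have hq0 : 0 < q := by rw [hq_def]; positivity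
    have hqm : q * (π₂ : ℝ) = (π₁ : ℝ) := by
      rw [hq_def]; exact div_mul_cancel₀ _ (ne_of_gt hπ₂0)
    have hub : q < l * t := by
      by_contra hcon
      push_neg at hcon
      have h1 : l * t * (π₂ : ℝ) ≤ q * (π₂ : ℝ) :=
        mul_le_mul_of_nonneg_right hcon (le_of_lt hπ₂0)
      have h2 : l * t * L < l * t * (π₂ : ℝ) :=
        mul_lt_mul_of_pos_left hπ₂l (by positivity)
      have h3 : l * (t * L) = l * t * L := by ring
      rw [h3] at hπ₁u
      linarith
    have hlb : t / l < q := by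
      by_contra hcon
      push_neg at hcon
      have h1 : q * (π₂ : ℝ) ≤ t / l * (π₂ : ℝ) :=
        mul_le_mul_of_nonneg_right hcon (le_of_lt hπ₂0)
      have h2 : t / l * (π₂ : ℝ) < t / l * (l * L) :=
        mul_lt_mul_of_pos_left hπ₂u (by positivity)
      have h3 : t / l * (l * L) = t * L := by
        field_simp
      linarith
    rw [abs_sub_lt_iff]
    have hlt : l * t - t = ε / 2 := by rw [hl_def]; field_simp; ring
    constructor
    · linarith
    · have h1 : t - t / l = (ε / 2) / l := by rw [hl_def]; field_simp; ring
      have h2 : (ε / 2) / l < ε / 2 := div_lt_self (by linarith) hl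
      linarith
  have hNeg : ∀ q ∈ {q : ℝ | ∃ π₁ π₂ : O, Prime π₁ ∧ Prime π₂ ∧ q = (π₁ : ℝ) / (π₂ : ℝ)},
      -q ∈ {q : ℝ | ∃ π₁ π₂ : O, Prime π₁ ∧ Prime π₂ ∧ q = (π₁ : ℝ) / (π₂ : ℝ)} := by
    rintro q ⟨π₁, π₂, hp₁, hp₂, rfl⟩
    exact ⟨-π₁, π₂, hp₁.neg, hp₂, by push_cast; ring⟩
  rw [Metric.dense_iff]
  intro t ε hε
  rcases lt_trichotomy t 0 with ht | ht | ht
  · obtain ⟨q, hqS, hq⟩ := hPos (-t) ε (by linarith) hε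
    refine ⟨-q, ?_, hNeg q hqS⟩
    rw [Metric.mem_ball, Real.dist_eq]
    have : |-q - t| = |q - (-t)| := by rw [← abs_neg]; ring_nf
    rw [this]; exact hq
  · obtain ⟨q, hqS, hq⟩ := hPos (ε/2) (ε/2) (by linarith) (by linarith)
    refine ⟨q, ?_, hqS⟩
    rw [Metric.mem_ball, Real.dist_eq, ht, sub_zero, abs_lt]
    obtain ⟨a1, a2⟩ := abs_sub_lt_iff.mp hq
    constructor <;> linarith
  · obtain ⟨q, hqS, hq⟩ := hPos t ε ht hε
    exact ⟨q, by rw [Metric.mem_ball, Real.dist_eq]; exact hq, hqS⟩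
end
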